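/- arXiv:1706.09276 — 3 statements merged into one kernel-verified Lean document; each statement's English description precedes it below -/
import Mathlib

section
/- Let A be a unital C*-algebra, h = h* ∈ A self-adjoint, and a ∈ A. Then ‖exp(ih)·a·exp(−ih) − a‖ ≤ ‖ha − ah‖. In particular ‖[exp(ih), a]‖ ≤ ‖[h, a]‖. -/
open NormedSpace

/-- Let `A` be a unital C*-algebra, `h = h* ∈ A`, and `a ∈ A`. Then
`‖exp(ih)·a·exp(−ih) − a‖ ≤ ‖ha − ah‖`; in particular
`‖[exp(ih), a]‖ ≤ ‖[h, a]‖`. -/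
theorem norm_exp_conj_sub_le_norm_commutator {A : Type*} [CStarAlgebra A]
    (h a : A) (hh : IsSelfAdjoint h) :
    ‖NormedSpace.exp (Complex.I • h) * a * NormedSpace.exp (-(Complex.I • h)) - a‖ ≤
      ‖h * a - a * h‖ ∧
    ‖NormedSpace.exp (Complex.I • h) * a - a * NormedSpace.exp (Complex.I • h)‖ ≤
      ‖h * a - a * h‖ := by
  rcases subsingleton_or_nontrivial A with hA | hA
  · constructor <;> simp [Subsingleton.elim a 0, Subsingleton.elim h 0]
  let +nondep : NormedAlgebra ℚ A := .restrictScalars ℚ ℂ A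
  set x : A := Complex.I • h with hxdef
  -- exponentials of real multiples of x are unitary, hence of norm one
  have hskew : ∀ t : ℝ, t • x ∈ skewAdjoint A := by
    intro t
    have h1 : t • x = Complex.I • (t • h) := smul_comm t Complex.I h
    rw [h1]
    exact IsSelfAdjoint.smul_mem_skewAdjoint
      (by simp [skewAdjoint.mem_iff, Complex.conj_I]) (IsSelfAdjoint.smul (star_trivial t) hh)
  have hnorm : ∀ t : ℝ, ‖exp (t • x)‖ = 1 := fun t =>
    CStarRing.norm_of_mem_unitary (exp_mem_unitary_of_mem_skewAdjoint (hskew t))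
  have hnorm' : ∀ t : ℝ, ‖exp (t • -x)‖ = 1 := by
    intro t
    have : t • -x = (-t) • x := by rw [smul_neg, neg_smul]
    rw [this]; exact hnorm (-t)
  -- the commutator bound
  have hcomm : ‖x * a - a * x‖ = ‖h * a - a * h‖ := by
    have : x * a - a * x = Complex.I • (h * a - a * h) := by
      rw [hxdef, smul_mul_assoc, mul_smul_comm, smul_sub]
    rw [this, norm_smul, Complex.norm_I, one_mul]
  -- the function t ↦ exp(tx) a exp(-tx) and its derivative
  set g : ℝ → A := fun t => exp (t • x) * a * exp (t • -x) with hgdef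
  set g' : ℝ → A := fun t => exp (t • x) * (x * a - a * x) * exp (t • -x) with hg'def
  have hderiv : ∀ t : ℝ, HasDerivAt g (g' t) t := by
    intro t
    have h1 : HasDerivAt (fun u : ℝ => exp (u • x)) (exp (t • x) * x) t :=
      hasDerivAt_exp_smul_const x t
    have h2 : HasDerivAt (fun u : ℝ => exp (u • -x)) (-x * exp (t • -x)) t :=
      hasDerivAt_exp_smul_const' (-x) t
    have := (h1.mul_const a).mul h2
    convert this using 1
    · rfl
    simp only [hg'def]
    noncomm_ring
  have hbound : ∀ t : ℝ, ‖g' t‖ ≤ ‖h * a - a * h‖ := by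
    intro t
    calc ‖g' t‖ ≤ ‖exp (t • x) * (x * a - a * x)‖ * ‖exp (t • -x)‖ := norm_mul_le _ _
      _ ≤ ‖exp (t • x)‖ * ‖x * a - a * x‖ * ‖exp (t • -x)‖ := by
          gcongr; exact norm_mul_le _ _
      _ = ‖h * a - a * h‖ := by rw [hnorm, hnorm', hcomm, one_mul, mul_one]
  -- mean value inequality on [0,1] (we use the whole line)
  have key : ‖g 1 - g 0‖ ≤ ‖h * a - a * h‖ := by
    have := Convex.norm_image_sub_le_of_norm_hasDerivWithin_le
      (f := g) (f' := g') (s := Set.univ) (C := ‖h * a - a * h‖)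
      (fun t _ => (hderiv t).hasDerivWithinAt) (fun t _ => hbound t) convex_univ
      (Set.mem_univ (0 : ℝ)) (Set.mem_univ (1 : ℝ))
    simpa using this
  have hg1 : g 1 = exp x * a * exp (-x) := by
    simp [hgdef, one_smul]
  have hg0 : g 0 = a := by simp [hgdef]
  have first : ‖exp x * a * exp (-x) - a‖ ≤ ‖h * a - a * h‖ := by
    simpa only [hg1, hg0] using key
  refine ⟨first, ?_⟩
  -- second part
  have hinv : exp (-x) * exp x = 1 := by
    rw [← exp_add_of_commute (Commute.refl x).neg_left, neg_add_cancel, exp_zero]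
  have hfact : exp x * a - a * exp x = (exp x * a * exp (-x) - a) * exp x := by
    rw [sub_mul, mul_assoc, mul_assoc, hinv, mul_one]
  rw [hfact]
  calc ‖(exp x * a * exp (-x) - a) * exp x‖
      ≤ ‖exp x * a * exp (-x) - a‖ * ‖exp x‖ := norm_mul_le _ _
    _ ≤ ‖h * a - a * h‖ * 1 := by
        apply mul_le_mul first _ (norm_nonneg _) (norm_nonneg _)
        have : exp x = exp ((1:ℝ) • x) := by simp [one_smul]
        rw [this]; exact le_of_eq (hnorm 1)
    _ = ‖h * a - a * h‖ := mul_one _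
end

section
/- Let A be a unital C*-algebra and z ∈ A a unitary. Then there exists a continuous path u : [0,1] → U(M₃(A)) with u(0) = 1, u(1) = diag(z², z*, z*), length ℓ(u) ≤ 4π/3, and such that for every a ∈ A and every t ∈ [0,1] one has ‖[u(t), diag(a,a,a)]‖ ≤ 2‖[z, a]‖. -/
open scoped ENNReal

noncomputable section
namespace MHP
open Complex Matrix

/-! ### Scalar (complex) layer -/

def ω : ℂ := Complex.exp (2 * Real.pi * I / 3)

lemma hω3 : ω ^ 3 = 1 := by
  rw [ω, ← Complex.exp_nat_mul]
  rw [show (3:ℕ) * (2 * (Real.pi:ℂ) * I / 3) = 2 * Real.pi * I by ring]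
  exact Complex.exp_two_pi_mul_I

lemma hωne : ω ≠ 1 := by
  intro h
  have him : ω.im = Real.sin (2 * Real.pi / 3) := by
    rw [ω, show 2 * (Real.pi:ℂ) * I / 3 = (↑(2 * Real.pi / 3)) * I by push_cast; ring,
      Complex.exp_ofReal_mul_I_im]
  have hpos : 0 < Real.sin (2 * Real.pi / 3) :=
    Real.sin_pos_of_pos_of_lt_pi (by positivity) (by nlinarith [Real.pi_pos])
  rw [h] at him
  simp at him
  nlinarith

lemma hωsum : 1 + ω + ω ^ 2 = 0 := by
  have h : (ω - 1) * (1 + ω + ω ^ 2) = 0 := by linear_combination hω3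
  rcases mul_eq_zero.mp h with h' | h'
  · exact absurd (sub_eq_zero.mp h') hωne
  · exact h'

lemma hωconj : (starRingEnd ℂ) ω = ω ^ 2 := by
  have habs : ω * (starRingEnd ℂ) ω = 1 := by
    rw [mul_comm, Complex.conj_mul']
    rw [show ‖ω‖ = 1 by
      rw [ω,
        show 2 * (Real.pi:ℂ) * I / 3 = (↑(2 * Real.pi / 3)) * I by push_cast; ring]
      exact Complex.norm_exp_ofReal_mul_I _]
    norm_num
  have h2 : ω * ω ^ 2 = 1 := by linear_combination hω3
  have hne : ω ≠ 0 := by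
    intro h
    have := hω3; rw [h] at this; simp at this
  exact mul_left_cancel₀ hne (habs.trans h2.symm)

lemma e4 : ω ^ 4 = ω := by rw [show (4:ℕ) = 3 + 1 from rfl, pow_add, hω3, one_mul, pow_one]
lemma e5 : ω ^ 5 = ω ^ 2 := by rw [show (5:ℕ) = 3 + 2 from rfl, pow_add, hω3, one_mul]
lemma e6 : ω ^ 6 = 1 := by rw [show (6:ℕ) = 3 + 3 from rfl, pow_add, hω3, one_mul]
lemma e7 : ω ^ 7 = ω := by rw [show (7:ℕ) = 6 + 1 from rfl, pow_add, e6, one_mul, pow_one]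
lemma e8 : ω ^ 8 = ω ^ 2 := by rw [show (8:ℕ) = 6 + 2 from rfl, pow_add, e6, one_mul]
lemma e9 : ω ^ 9 = 1 := by rw [show (9:ℕ) = 6 + 3 from rfl, pow_add, e6, one_mul, hω3]
lemma e10 : ω ^ 10 = ω := by rw [show (10:ℕ) = 9 + 1 from rfl, pow_add, e9, one_mul, pow_one]
lemma e11 : ω ^ 11 = ω ^ 2 := by rw [show (11:ℕ) = 9 + 2 from rfl, pow_add, e9, one_mul]
lemma e12 : ω ^ 12 = 1 := by rw [show (12:ℕ) = 9 + 3 from rfl, pow_add, e9, one_mul, hω3]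
lemma e13 : ω ^ 13 = ω := by rw [show (13:ℕ) = 12 + 1 from rfl, pow_add, e12, one_mul, pow_one]
lemma e14 : ω ^ 14 = ω ^ 2 := by rw [show (14:ℕ) = 12 + 2 from rfl, pow_add, e12, one_mul]
lemma e15 : ω ^ 15 = 1 := by rw [show (15:ℕ) = 12 + 3 from rfl, pow_add, e12, one_mul, hω3]
lemma e16 : ω ^ 16 = ω := by rw [show (16:ℕ) = 15 + 1 from rfl, pow_add, e15, one_mul, pow_one]

def Gm : Matrix (Fin 3) (Fin 3) ℂ := Matrix.of fun j k => ω ^ (j.val * k.val)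

def cf (t : ℝ) : ℂ := Complex.exp ((2 * Real.pi * t / 3 : ℝ) * I)

def Dm (t : ℝ) : Matrix (Fin 3) (Fin 3) ℂ := diagonal ![1, cf t, star (cf t)]

def Pm : Matrix (Fin 3) (Fin 3) ℂ := !![0,1,0; 0,0,1; 1,0,0]

lemma hGG' : Gm * star Gm = (3:ℂ) • 1 := by
  ext j l
  fin_cases j <;> fin_cases l <;>
    simp [Gm, Matrix.mul_apply, Fin.sum_univ_three, Matrix.conjTranspose_apply, map_pow, hωconj,
      ← pow_mul, Matrix.one_apply]
  all_goals ring_nf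
  all_goals try simp only [hω3, e4, e5, e6, e7, e8, e9, e10, e11, e12, e13, e14, e15, e16]
  all_goals (first | ring1 | linear_combination hωsum | linear_combination ω * hωsum |
    linear_combination ω^2 * hωsum)

lemma hG'G : star Gm * Gm = (3:ℂ) • 1 := by
  ext j l
  fin_cases j <;> fin_cases l <;>
    simp [Gm, Matrix.mul_apply, Fin.sum_univ_three, Matrix.conjTranspose_apply, map_pow, hωconj,
      ← pow_mul, Matrix.one_apply]
  all_goals ring_nf
  all_goals try simp only [hω3, e4, e5, e6, e7, e8, e9, e10, e11, e12, e13, e14, e15, e16]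
  all_goals (first | ring1 | linear_combination hωsum | linear_combination ω * hωsum |
    linear_combination ω^2 * hωsum)

lemma hcf_abs (t : ℝ) : (starRingEnd ℂ) (cf t) * cf t = 1 := by
  rw [cf, ← Complex.exp_conj, ← Complex.exp_add]
  have h : (starRingEnd ℂ) (((2 * Real.pi * t / 3 : ℝ) : ℂ) * I)
      = -(((2 * Real.pi * t / 3 : ℝ) : ℂ) * I) := by
    rw [_root_.map_mul, Complex.conj_ofReal, Complex.conj_I, mul_neg]
  rw [h, neg_add_cancel, Complex.exp_zero]

lemma hcf_abs' (t : ℝ) : cf t * (starRingEnd ℂ) (cf t) = 1 := by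
  rw [mul_comm]; exact hcf_abs t

lemma hc1 : cf 1 = ω := by
  rw [cf, ω]; congr 1; push_cast; ring

lemma hc0 : cf 0 = 1 := by
  rw [cf]; norm_num

lemma hW1 : Gm * Dm 1 * star Gm = (3:ℂ) • Pm := by
  have hc1' : star (cf 1) = ω ^ 2 := by rw [hc1, Complex.star_def, hωconj]
  ext j l
  fin_cases j <;> fin_cases l <;>
    simp [Gm, Dm, Pm, hc1, hc1', Matrix.mul_apply, Fin.sum_univ_three,
      Matrix.conjTranspose_apply, map_pow, hωconj, ← pow_mul, Matrix.diagonal, Matrix.of_apply,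
      Matrix.vecHead, Matrix.vecTail]
  all_goals ring_nf
  all_goals try simp only [hω3, e4, e5, e6, e7, e8, e9, e10, e11, e12, e13, e14, e15, e16]
  all_goals (first | ring1 | linear_combination hωsum | linear_combination ω * hωsum |
    linear_combination ω^2 * hωsum)

def Wm (t : ℝ) : Matrix (Fin 3) (Fin 3) ℂ := (3⁻¹ : ℂ) • (Gm * Dm t * star Gm)

lemma hDD' (t : ℝ) : Dm t * star (Dm t) = 1 := by
  ext i j
  fin_cases i <;> fin_cases j <;>
    simp [Dm, Matrix.mul_apply, Fin.sum_univ_three, Matrix.one_apply,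
      Matrix.conjTranspose_apply, Matrix.diagonal, Matrix.of_apply, hcf_abs, hcf_abs']

lemma hD'D (t : ℝ) : star (Dm t) * Dm t = 1 := by
  ext i j
  fin_cases i <;> fin_cases j <;>
    simp [Dm, Matrix.mul_apply, Fin.sum_univ_three, Matrix.one_apply,
      Matrix.conjTranspose_apply, Matrix.diagonal, Matrix.of_apply, hcf_abs, hcf_abs']

lemma hsW (t : ℝ) : star (Wm t) = (3⁻¹ : ℂ) • (Gm * star (Dm t) * star Gm) := by
  rw [Wm, star_smul, StarMul.star_mul, StarMul.star_mul, star_star]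
  rw [show star (3⁻¹ : ℂ) = (3⁻¹:ℂ) by simp]
  rw [mul_assoc]

lemma hWW' (t : ℝ) : Wm t * star (Wm t) = 1 := by
  rw [hsW, Wm, smul_mul_smul_comm]
  have : Gm * Dm t * star Gm * (Gm * star (Dm t) * star Gm)
      = (3:ℂ) • (Gm * star Gm) := by
    calc Gm * Dm t * star Gm * (Gm * star (Dm t) * star Gm)
        = Gm * Dm t * (star Gm * Gm) * (star (Dm t) * star Gm) := by
          simp only [mul_assoc]
      _ = Gm * Dm t * ((3:ℂ) • 1) * (star (Dm t) * star Gm) := by rw [hG'G]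
      _ = (3:ℂ) • (Gm * (Dm t * star (Dm t)) * star Gm) := by
          simp only [mul_smul_comm, smul_mul_assoc, mul_one]
          simp only [mul_assoc]
      _ = (3:ℂ) • (Gm * star Gm) := by rw [hDD' t, mul_one]
  rw [this, hGG', smul_smul, smul_smul]
  norm_num

lemma hW'W (t : ℝ) : star (Wm t) * Wm t = 1 := by
  rw [hsW, Wm, smul_mul_smul_comm]
  have : Gm * star (Dm t) * star Gm * (Gm * Dm t * star Gm)
      = (3:ℂ) • (Gm * star Gm) := by
    calc Gm * star (Dm t) * star Gm * (Gm * Dm t * star Gm)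
        = Gm * star (Dm t) * (star Gm * Gm) * (Dm t * star Gm) := by
          simp only [mul_assoc]
      _ = Gm * star (Dm t) * ((3:ℂ) • 1) * (Dm t * star Gm) := by rw [hG'G]
      _ = (3:ℂ) • (Gm * (star (Dm t) * Dm t) * star Gm) := by
          simp only [mul_smul_comm, smul_mul_assoc, mul_one]
          simp only [mul_assoc]
      _ = (3:ℂ) • (Gm * star Gm) := by rw [hD'D t, mul_one]
  rw [this, hGG', smul_smul, smul_smul]
  norm_num

lemma hD0 : Dm 0 = 1 := by
  rw [Dm]
  have h : ![(1:ℂ), cf 0, star (cf 0)] = fun _ => (1:ℂ) := by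
    funext i
    fin_cases i <;> simp [hc0]
  rw [h, Matrix.diagonal_one]

lemma hW0 : Wm 0 = 1 := by
  rw [Wm, hD0, mul_one, hGG', smul_smul]
  norm_num

lemma hWm1 : Wm 1 = Pm := by
  rw [Wm, hW1, smul_smul]
  norm_num

lemma hWdiff (t s : ℝ) :
    Wm t - Wm s
      = (3⁻¹ : ℂ) • (Gm * diagonal ![0, cf t - cf s, star (cf t) - star (cf s)] * star Gm) := by
  have h : Dm t - Dm s = diagonal ![0, cf t - cf s, star (cf t) - star (cf s)] := by
    ext i j
    fin_cases i <;> fin_cases j <;>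
      simp [Dm, Matrix.diagonal, Matrix.of_apply]
  rw [Wm, Wm, ← smul_sub]
  congr 1
  rw [← sub_mul, ← mul_sub, h]

lemma abs_exp_mul_I_sub_one_le (x : ℝ) :
    ‖Complex.exp ((x:ℂ) * I) - 1‖ ≤ |x| := by
  have hre : (Complex.exp ((x:ℂ) * I) - 1).re = Real.cos x - 1 := by
    simp [Complex.exp_ofReal_mul_I_re]
  have him : (Complex.exp ((x:ℂ) * I) - 1).im = Real.sin x := by
    simp [Complex.exp_ofReal_mul_I_im]
  have hsq : (‖Complex.exp ((x:ℂ) * I) - 1‖) ^ 2 = 2 - 2 * Real.cos x := by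
    rw [Complex.sq_norm, Complex.normSq_apply, hre, him]
    nlinarith [Real.sin_sq_add_cos_sq x]
  have hcos : 1 - Real.cos x ≤ x ^ 2 / 2 := by
    have h2 : Real.cos x = 1 - 2 * Real.sin (x / 2) ^ 2 := by
      have hc := Real.cos_two_mul (x / 2)
      have hs := Real.sin_sq_add_cos_sq (x / 2)
      rw [show 2 * (x / 2) = x by ring] at hc
      nlinarith
    have h3 : |Real.sin (x / 2)| ≤ |x / 2| := Real.abs_sin_le_abs
    have h4 : Real.sin (x / 2) ^ 2 ≤ (x / 2) ^ 2 := by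
      have e1 := _root_.sq_abs (Real.sin (x / 2))
      have e2 := _root_.sq_abs (x / 2)
      nlinarith [abs_nonneg (Real.sin (x / 2)), abs_nonneg (x / 2)]
    nlinarith
  nlinarith [norm_nonneg (Complex.exp ((x:ℂ) * I) - 1), abs_nonneg x, _root_.sq_abs x]

lemma cf_diff (t s : ℝ) : ‖cf t - cf s‖ ≤ 2 * Real.pi / 3 * |t - s| := by
  have key : cf t - cf s = cf s * (Complex.exp ((((2 * Real.pi * (t - s) / 3 : ℝ)):ℂ) * I) - 1) := by
    rw [mul_sub, mul_one, cf, cf, ← Complex.exp_add]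
    congr 2
    push_cast
    ring
  rw [key, norm_mul]
  rw [show ‖cf s‖ = 1 by rw [cf]; exact Complex.norm_exp_ofReal_mul_I _, one_mul]
  calc ‖Complex.exp ((((2 * Real.pi * (t - s) / 3 : ℝ)):ℂ) * I) - 1‖
      ≤ |2 * Real.pi * (t - s) / 3| := abs_exp_mul_I_sub_one_le _
    _ = 2 * Real.pi / 3 * |t - s| := by
        rw [abs_div, abs_mul, abs_mul, show |(2:ℝ)| = 2 from by norm_num,
          _root_.abs_of_nonneg Real.pi_pos.le, show |(3:ℝ)| = 3 from by norm_num]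
        ring

/-! ### C*-algebra layer -/

lemma norm_one_le (C : Type*) [CStarAlgebra C] : ‖(1 : C)‖ ≤ 1 := by
  rcases subsingleton_or_nontrivial C with h | h
  · simp [Subsingleton.elim (1 : C) (0 : C)]
  · exact le_of_eq CStarRing.norm_one

lemma norm_le_of_decomp {C : Type*} [CStarAlgebra C] (x y : C) (M : ℝ) (hM : 0 ≤ M)
    (h : star x * x + star y * y = algebraMap ℝ C (M ^ 2)) : ‖x‖ ≤ M := by
  letI := CStarAlgebra.spectralOrder C
  haveI := CStarAlgebra.spectralOrderedRing C
  have h1 : star x * x ≤ algebraMap ℝ C (M ^ 2) := h ▸ le_add_of_nonneg_right (star_mul_self_nonneg y)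
  have h2 : ‖star x * x‖ ≤ ‖algebraMap ℝ C (M ^ 2)‖ :=
    CStarAlgebra.norm_le_norm_of_nonneg_of_le (star_mul_self_nonneg x) h1
  have h3 : ‖algebraMap ℝ C (M ^ 2)‖ ≤ M ^ 2 := by
    rw [norm_algebraMap]
    have := norm_one_le C
    have hM2 : ‖(M ^ 2 : ℝ)‖ = M ^ 2 := by
      rw [Real.norm_eq_abs]
      exact _root_.abs_of_nonneg (by positivity)
    rw [hM2]
    nlinarith [norm_nonneg (1 : C)]
  have h4 : ‖star x * x‖ = ‖x‖ * ‖x‖ := CStarRing.norm_star_mul_self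
  nlinarith [norm_nonneg x]

section Phi

variable {A B : Type*} [CStarAlgebra A] [CStarAlgebra B]
  (φ : Matrix (Fin 3) (Fin 3) A ≃⋆ₐ[ℂ] B)

/-- entrywise embedding of scalar matrices -/
def ρ (M : Matrix (Fin 3) (Fin 3) ℂ) : Matrix (Fin 3) (Fin 3) A :=
  M.map (algebraMap ℂ A)

lemma ρ_mul (M N : Matrix (Fin 3) (Fin 3) ℂ) :
    (ρ (M * N) : Matrix (Fin 3) (Fin 3) A) = ρ M * ρ N :=
  Matrix.map_mul

lemma ρ_one : (ρ 1 : Matrix (Fin 3) (Fin 3) A) = 1 :=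
  Matrix.map_one _ (map_zero _) (map_one _)

lemma ρ_star (M : Matrix (Fin 3) (Fin 3) ℂ) :
    (ρ (star M) : Matrix (Fin 3) (Fin 3) A) = star (ρ M) := by
  rw [Matrix.star_eq_conjTranspose, Matrix.star_eq_conjTranspose, ρ, ρ,
    Matrix.conjTranspose_map (algebraMap ℂ A) (fun a => algebraMap_star_comm (A := A) a)]

lemma ρ_smul (w : ℂ) (M : Matrix (Fin 3) (Fin 3) ℂ) :
    (ρ (w • M) : Matrix (Fin 3) (Fin 3) A) = w • ρ M := by
  ext i j
  show algebraMap ℂ A ((w • M) i j) = w • (algebraMap ℂ A (M i j))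
  rw [Matrix.smul_apply, smul_eq_mul, _root_.map_mul, Algebra.smul_def]

lemma ρ_sub (M N : Matrix (Fin 3) (Fin 3) ℂ) :
    (ρ (M - N) : Matrix (Fin 3) (Fin 3) A) = ρ M - ρ N := by
  ext i j
  simp [ρ, Matrix.map_apply]

lemma ρ_diag (d : Fin 3 → ℂ) :
    (ρ (diagonal d) : Matrix (Fin 3) (Fin 3) A) = diagonal (fun i => algebraMap ℂ A (d i)) :=
  Matrix.diagonal_map (map_zero _)

lemma ρ_comm (M : Matrix (Fin 3) (Fin 3) ℂ) (a : A) :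
    (ρ M : Matrix (Fin 3) (Fin 3) A) * diagonal (fun _ => a)
      = diagonal (fun _ => a) * ρ M := by
  ext i j
  fin_cases i <;> fin_cases j <;>
    simp [ρ, Matrix.mul_apply, Fin.sum_univ_three, Matrix.diagonal, Matrix.of_apply,
      Matrix.map_apply] <;>
    first
      | rfl
      | exact (Algebra.commutes _ _).symm
      | exact Algebra.commutes _ _

lemma norm_phi_diag_le (d : Fin 3 → A) (M : ℝ) (hM : 0 ≤ M) (hd : ∀ i, ‖d i‖ ≤ M) :
    ‖φ (diagonal d)‖ ≤ M := by
  letI := CStarAlgebra.spectralOrder A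
  haveI := CStarAlgebra.spectralOrderedRing A
  have hnn : ∀ c : ℝ, 0 ≤ c → 0 ≤ algebraMap ℝ A c := by
    intro c hc
    have hd : algebraMap ℝ A c
        = star (algebraMap ℝ A (Real.sqrt c)) * algebraMap ℝ A (Real.sqrt c) := by
      have hsa : star (algebraMap ℝ A (Real.sqrt c)) = algebraMap ℝ A (Real.sqrt c) := by
        rw [← algebraMap_star_comm, star_trivial]
      rw [hsa, ← _root_.map_mul, Real.mul_self_sqrt hc]
    rw [hd]
    exact star_mul_self_nonneg _
  have hr : ∀ i, 0 ≤ algebraMap ℝ A (M ^ 2) - star (d i) * d i := by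
    intro i
    have h1 : star (d i) * d i ≤ algebraMap ℝ A (‖d i‖ ^ 2) :=
      CStarAlgebra.star_mul_le_algebraMap_norm_sq
    have h2 : algebraMap ℝ A (‖d i‖ ^ 2) ≤ algebraMap ℝ A (M ^ 2) := by
      have h3 := hnn (M ^ 2 - ‖d i‖ ^ 2) (by nlinarith [norm_nonneg (d i), hd i])
      rw [map_sub] at h3
      exact sub_nonneg.mp h3
    exact sub_nonneg.mpr (h1.trans h2)
  have hex : ∀ i, ∃ ci : A, star ci * ci = algebraMap ℝ A (M ^ 2) - star (d i) * d i := by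
    intro i
    refine ⟨CFC.sqrt (algebraMap ℝ A (M ^ 2) - star (d i) * d i), ?_⟩
    rw [(IsSelfAdjoint.of_nonneg (CFC.sqrt_nonneg _)).star_eq, CFC.sqrt_mul_sqrt_self _ (hr i)]
  choose c hcc using hex
  apply norm_le_of_decomp (φ (diagonal d)) (φ (diagonal c)) M hM
  rw [← map_star, ← map_star, ← _root_.map_mul, ← _root_.map_mul, ← map_add]
  have hvec : (fun i => star (d i) * d i + star (c i) * c i)
      = fun _ : Fin 3 => algebraMap ℝ A (M ^ 2) := by
    funext i
    rw [hcc i]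
    abel
  have hmat : star (diagonal d) * diagonal d + star (diagonal c) * diagonal c
      = diagonal (fun _ : Fin 3 => algebraMap ℝ A (M ^ 2)) := by
    rw [Matrix.star_eq_conjTranspose, Matrix.star_eq_conjTranspose,
      Matrix.diagonal_conjTranspose, Matrix.diagonal_conjTranspose,
      Matrix.diagonal_mul_diagonal, Matrix.diagonal_mul_diagonal, Matrix.diagonal_add, ← hvec]
    rfl
  rw [hmat]
  have h1 : (diagonal (fun _ : Fin 3 => algebraMap ℝ A (M ^ 2)) : Matrix (Fin 3) (Fin 3) A)
      = ((M ^ 2 : ℝ) : ℂ) • 1 := by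
    have hfun : (fun _ : Fin 3 => algebraMap ℝ A (M ^ 2))
        = fun _ : Fin 3 => ((M ^ 2 : ℝ) : ℂ) • (1 : A) := by
      funext i
      rw [Algebra.algebraMap_eq_smul_one, ← algebraMap_smul ℂ (M ^ 2 : ℝ) (1 : A),
        Complex.coe_algebraMap]
    rw [hfun,
      show (fun _ : Fin 3 => ((M ^ 2 : ℝ) : ℂ) • (1 : A))
        = ((M ^ 2 : ℝ) : ℂ) • (fun _ : Fin 3 => (1 : A)) from rfl,
      Matrix.diagonal_smul, Matrix.diagonal_one]
  rw [h1, _root_.map_smul, _root_.map_one, Algebra.algebraMap_eq_smul_one,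
    ← algebraMap_smul ℂ (M ^ 2 : ℝ) (1 : B), Complex.coe_algebraMap]

lemma norm_phi_rho_sandwich (Y : B) :
    ‖φ (ρ Gm) * Y * φ (ρ (star Gm))‖ ≤ 3 * ‖Y‖ := by
  have hprod : ‖φ (ρ Gm : Matrix (Fin 3) (Fin 3) A)‖ * ‖φ (ρ (star Gm) : Matrix (Fin 3) (Fin 3) A)‖
      ≤ 3 := by
    rw [ρ_star, map_star, norm_star, ← CStarRing.norm_star_mul_self, ← map_star, ← _root_.map_mul,
      ← ρ_star, ← ρ_mul, hG'G, ρ_smul, ρ_one, _root_.map_smul, _root_.map_one, norm_smul]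
    have h1 : ‖(3:ℂ)‖ = 3 := by
      rw [show (3:ℂ) = ((3:ℝ):ℂ) by norm_num, Complex.norm_real, Real.norm_eq_abs]
      norm_num
    rw [h1]
    nlinarith [norm_one_le B, norm_nonneg (1 : B)]
  calc ‖φ (ρ Gm) * Y * φ (ρ (star Gm))‖
      ≤ ‖φ (ρ Gm) * Y‖ * ‖φ (ρ (star Gm))‖ := norm_mul_le _ _
    _ ≤ ‖φ (ρ Gm)‖ * ‖Y‖ * ‖φ (ρ (star Gm))‖ := by
        gcongr
        exact norm_mul_le _ _
    _ = ‖φ (ρ Gm)‖ * ‖φ (ρ (star Gm))‖ * ‖Y‖ := by ring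
    _ ≤ 3 * ‖Y‖ := mul_le_mul_of_nonneg_right hprod (norm_nonneg Y)

end Phi

end MHP
end

open MHP Matrix

set_option maxHeartbeats 1000000

/-- Let `A` be a unital C*-algebra and `z ∈ A` a unitary, and realize `M₃(A)` with its
C*-norm as a unital C*-algebra `B` via a *-algebra isomorphism `φ : M₃(A) ≅ B`. Then
there is a continuous path `u : [0,1] → U(M₃(A))` with `u(0) = 1`,
`u(1) = diag(z², z*, z*)`, length at most `4π/3`, and
`‖[u(t), diag(a,a,a)]‖ ≤ 2‖[z,a]‖` for all `a ∈ A`, `t ∈ [0,1]`. -/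
theorem matrix_halfexp_path {A B : Type*} [CStarAlgebra A] [CStarAlgebra B]
    (φ : Matrix (Fin 3) (Fin 3) A ≃⋆ₐ[ℂ] B)
    (z : A) (hz : z ∈ unitary A) :
    ∃ u : ℝ → B,
      ContinuousOn u (Set.Icc 0 1) ∧
      (∀ t ∈ Set.Icc (0:ℝ) 1, u t ∈ unitary B) ∧
      u 0 = 1 ∧
      u 1 = φ (Matrix.diagonal ![z * z, star z, star z]) ∧
      eVariationOn u (Set.Icc 0 1) ≤ ENNReal.ofReal (4 * Real.pi / 3) ∧
      ∀ a : A, ∀ t ∈ Set.Icc (0:ℝ) 1,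
        ‖u t * φ (Matrix.diagonal ![a, a, a]) - φ (Matrix.diagonal ![a, a, a]) * u t‖ ≤
          2 * ‖z * a - a * z‖ := by
  obtain ⟨hz1, hz2⟩ := Unitary.mem_iff.mp hz
  set V : Matrix (Fin 3) (Fin 3) A := Matrix.diagonal ![star z, z, 1] with hVdef
  -- star of V
  have hVstarvec : (star ![star z, z, 1] : Fin 3 → A) = ![z, star z, 1] := by
    funext i
    fin_cases i <;> simp
  have hVstar : star V = Matrix.diagonal ![z, star z, 1] := by
    rw [hVdef, Matrix.star_eq_conjTranspose, Matrix.diagonal_conjTranspose, hVstarvec]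
  -- V is unitary
  have hV'V : star V * V = 1 := by
    rw [hVstar, hVdef, Matrix.diagonal_mul_diagonal]
    have h : (fun i => ![z, star z, 1] i * ![star z, z, 1] i) = fun _ : Fin 3 => (1:A) := by
      funext i
      fin_cases i <;> simp [hz1, hz2]
    rw [h, Matrix.diagonal_one]
  have hVV' : V * star V = 1 := by
    rw [hVstar, hVdef, Matrix.diagonal_mul_diagonal]
    have h : (fun i => ![star z, z, 1] i * ![z, star z, 1] i) = fun _ : Fin 3 => (1:A) := by
      funext i
      fin_cases i <;> simp [hz1, hz2]
    rw [h, Matrix.diagonal_one]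
  set W' : ℝ → B := fun t => φ (ρ (Wm t)) with hW'def
  set VB : B := φ V with hVBdef
  set u : ℝ → B := fun t => W' t * VB * star (W' t) * star VB with hudef
  -- unitarity
  have hWmem : ∀ t, W' t ∈ unitary B := by
    intro t
    rw [Unitary.mem_iff]
    constructor
    · rw [hW'def]
      simp only
      rw [← map_star, ← _root_.map_mul, ← ρ_star, ← ρ_mul, hW'W, ρ_one, _root_.map_one]
    · rw [hW'def]
      simp only
      rw [← map_star, ← _root_.map_mul, ← ρ_star, ← ρ_mul, hWW', ρ_one, _root_.map_one]
  have hVmem : VB ∈ unitary B := by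
    rw [Unitary.mem_iff, hVBdef]
    constructor
    · rw [← map_star, ← _root_.map_mul, hV'V, _root_.map_one]
    · rw [← map_star, ← _root_.map_mul, hVV', _root_.map_one]
  have humem : ∀ t, u t ∈ unitary B := by
    intro t
    rw [hudef]
    exact mul_mem (mul_mem (mul_mem (hWmem t) hVmem) (Unitary.star_mem (hWmem t)))
      (Unitary.star_mem hVmem)
  -- Lipschitz bound for W'
  have hlipW : ∀ t s : ℝ, ‖W' t - W' s‖ ≤ 2 * Real.pi / 3 * |t - s| := by
    intro t s
    have hd : W' t - W' s
        = (3⁻¹:ℂ) • (φ (ρ Gm) *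
            φ (ρ (diagonal ![0, cf t - cf s, star (cf t) - star (cf s)])) * φ (ρ (star Gm))) := by
      rw [hW'def]
      simp only
      rw [← map_sub, ← ρ_sub, hWdiff t s, ρ_smul, ρ_mul, ρ_mul, _root_.map_smul,
        _root_.map_mul, _root_.map_mul]
    rw [hd, norm_smul]
    have h3 : ‖(3⁻¹:ℂ)‖ = 3⁻¹ := by
      rw [norm_inv]
      norm_num
    have hmid : ‖φ (ρ (diagonal ![0, cf t - cf s, star (cf t) - star (cf s)]) :
        Matrix (Fin 3) (Fin 3) A)‖ ≤ 2 * Real.pi / 3 * |t - s| := by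
      rw [ρ_diag]
      have hMt : (0:ℝ) ≤ 2 * Real.pi / 3 * |t - s| := by positivity
      apply norm_phi_diag_le φ _ _ hMt
      intro i
      have hone := norm_one_le A
      have hb : ∀ w : ℂ, ‖w‖ ≤ 2 * Real.pi / 3 * |t - s| →
          ‖algebraMap ℂ A w‖ ≤ 2 * Real.pi / 3 * |t - s| := by
        intro w hw
        rw [norm_algebraMap]
        nlinarith [norm_nonneg (1:A), norm_nonneg w]
      have h2 : ‖(starRingEnd ℂ) (cf t) - (starRingEnd ℂ) (cf s)‖
          ≤ 2 * Real.pi / 3 * |t - s| := by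
        rw [← map_sub, Complex.norm_conj]
        exact cf_diff t s
      fin_cases i <;> apply hb
      · simpa using hMt
      · simpa using cf_diff t s
      · simpa using h2
    calc ‖(3⁻¹:ℂ)‖ * ‖φ (ρ Gm) *
            φ (ρ (diagonal ![0, cf t - cf s, star (cf t) - star (cf s)])) * φ (ρ (star Gm))‖
        ≤ 3⁻¹ * (3 * ‖φ (ρ (diagonal ![0, cf t - cf s, star (cf t) - star (cf s)]) :
            Matrix (Fin 3) (Fin 3) A)‖) := by
          rw [h3]
          gcongr
          exact norm_phi_rho_sandwich φ _
      _ ≤ 3⁻¹ * (3 * (2 * Real.pi / 3 * |t - s|)) :=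
          mul_le_mul_of_nonneg_left (mul_le_mul_of_nonneg_left hmid (by norm_num))
            (by norm_num)
      _ = 2 * Real.pi / 3 * |t - s| := by ring
  -- Lipschitz bound for u
  have hlipu : ∀ t s : ℝ, ‖u t - u s‖ ≤ 4 * Real.pi / 3 * |t - s| := by
    intro t s
    have hid : u t - u s
        = (W' t - W' s) * (VB * (star (W' t) * star VB))
          + W' s * (VB * ((star (W' t) - star (W' s)) * star VB)) := by
      rw [hudef]
      simp only
      noncomm_ring
    have h1 : ‖(W' t - W' s) * (VB * (star (W' t) * star VB))‖ = ‖W' t - W' s‖ :=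
      CStarRing.norm_mul_mem_unitary _
        (mul_mem hVmem (mul_mem (Unitary.star_mem (hWmem t)) (Unitary.star_mem hVmem)))
    have h2 : ‖W' s * (VB * ((star (W' t) - star (W' s)) * star VB))‖ = ‖W' t - W' s‖ := by
      rw [CStarRing.norm_mem_unitary_mul _ (hWmem s), CStarRing.norm_mem_unitary_mul _ hVmem,
        CStarRing.norm_mul_mem_unitary _ (Unitary.star_mem hVmem), ← star_sub, norm_star]
    calc ‖u t - u s‖
        ≤ ‖(W' t - W' s) * (VB * (star (W' t) * star VB))‖
          + ‖W' s * (VB * ((star (W' t) - star (W' s)) * star VB))‖ := by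
          rw [hid]; exact norm_add_le _ _
      _ = ‖W' t - W' s‖ + ‖W' t - W' s‖ := by rw [h1, h2]
      _ ≤ 2 * Real.pi / 3 * |t - s| + 2 * Real.pi / 3 * |t - s| := by
          have := hlipW t s
          linarith
      _ = 4 * Real.pi / 3 * |t - s| := by ring
  have hlip : LipschitzWith (Real.toNNReal (4 * Real.pi / 3)) u := by
    apply LipschitzWith.of_dist_le_mul
    intro t s
    rw [dist_eq_norm, dist_eq_norm]
    have hco : (Real.toNNReal (4 * Real.pi / 3) : ℝ) = 4 * Real.pi / 3 :=
      Real.coe_toNNReal _ (by positivity)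
    rw [hco, Real.norm_eq_abs]
    exact hlipu t s
  refine ⟨u, hlip.continuous.continuousOn, fun t _ => humem t, ?_, ?_, ?_, ?_⟩
  · -- u 0 = 1
    have hW0' : W' 0 = 1 := by
      rw [hW'def]
      simp only
      rw [hW0, ρ_one, _root_.map_one]
    rw [hudef]
    simp only
    rw [hW0', one_mul, star_one, mul_one, hVBdef, ← map_star, ← _root_.map_mul, hVV',
      _root_.map_one]
  · -- u 1
    have hρP : (ρ Pm : Matrix (Fin 3) (Fin 3) A) = !![0,1,0; 0,0,1; 1,0,0] := by
      ext i j
      fin_cases i <;> fin_cases j <;>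
        simp [ρ, Pm, Matrix.mul_apply, Fin.sum_univ_three, Matrix.diagonal, Matrix.of_apply,
          Matrix.cons_val', Matrix.cons_val_zero, Matrix.cons_val_one, Matrix.head_cons,
          Matrix.empty_val', Matrix.cons_val_fin_one, Matrix.vecHead, Matrix.vecTail,
          Function.comp, Matrix.map_apply, Matrix.conjTranspose_apply]
    have hρPstar : star (ρ Pm : Matrix (Fin 3) (Fin 3) A) = !![0,0,1; 1,0,0; 0,1,0] := by
      rw [hρP]
      ext i j
      fin_cases i <;> fin_cases j <;>
        simp [Matrix.mul_apply, Fin.sum_univ_three, Matrix.diagonal, Matrix.of_apply,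
          Matrix.cons_val', Matrix.cons_val_zero, Matrix.cons_val_one, Matrix.head_cons,
          Matrix.empty_val', Matrix.cons_val_fin_one, Matrix.vecHead, Matrix.vecTail,
          Function.comp, Matrix.map_apply, Matrix.conjTranspose_apply]
    have hs1 : (!![0,1,0; 0,0,1; 1,0,0] : Matrix (Fin 3) (Fin 3) A)
        * Matrix.diagonal ![star z, z, 1] = !![0, z, 0; 0, 0, 1; star z, 0, 0] := by
      ext i j
      fin_cases i <;> fin_cases j <;>
        simp [Matrix.mul_apply, Fin.sum_univ_three, Matrix.diagonal, Matrix.of_apply,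
          Matrix.cons_val', Matrix.cons_val_zero, Matrix.cons_val_one, Matrix.head_cons,
          Matrix.empty_val', Matrix.cons_val_fin_one, Matrix.vecHead, Matrix.vecTail,
          Function.comp, Matrix.map_apply, Matrix.conjTranspose_apply]
    have hs2 : (!![0, z, 0; 0, 0, 1; star z, 0, 0] : Matrix (Fin 3) (Fin 3) A)
        * !![0,0,1; 1,0,0; 0,1,0] = !![z, 0, 0; 0, 1, 0; 0, 0, star z] := by
      ext i j
      fin_cases i <;> fin_cases j <;>
        simp [Matrix.mul_apply, Fin.sum_univ_three, Matrix.diagonal, Matrix.of_apply,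
          Matrix.cons_val', Matrix.cons_val_zero, Matrix.cons_val_one, Matrix.head_cons,
          Matrix.empty_val', Matrix.cons_val_fin_one, Matrix.vecHead, Matrix.vecTail,
          Function.comp, Matrix.map_apply, Matrix.conjTranspose_apply]
    have hs3 : (!![z, 0, 0; 0, 1, 0; 0, 0, star z] : Matrix (Fin 3) (Fin 3) A)
        * Matrix.diagonal ![z, star z, 1] = Matrix.diagonal ![z * z, star z, star z] := by
      ext i j
      fin_cases i <;> fin_cases j <;>
        simp [Matrix.mul_apply, Fin.sum_univ_three, Matrix.diagonal, Matrix.of_apply,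
          Matrix.cons_val', Matrix.cons_val_zero, Matrix.cons_val_one, Matrix.head_cons,
          Matrix.empty_val', Matrix.cons_val_fin_one, Matrix.vecHead, Matrix.vecTail,
          Function.comp, Matrix.map_apply, Matrix.conjTranspose_apply]
    have hfin : (ρ Pm : Matrix (Fin 3) (Fin 3) A) * V * star (ρ Pm) * star V
        = Matrix.diagonal ![z * z, star z, star z] := by
      rw [hVstar, hVdef, hρPstar, hρP, hs1, hs2, hs3]
    have hW1' : W' 1 = φ (ρ Pm) := by
      rw [hW'def]
      simp only
      rw [hWm1]
    rw [hudef]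
    simp only
    rw [hW1', hVBdef, ← map_star, ← map_star, ← _root_.map_mul, ← _root_.map_mul,
      ← _root_.map_mul, hfin]
  · -- eVariationOn
    have h1 := LipschitzOnWith.comp_eVariationOn_le (hlip.lipschitzOnWith (s := Set.univ))
      (Set.mapsTo_univ id (Set.Icc (0:ℝ) 1))
    rw [Function.comp_id] at h1
    have h2 : eVariationOn id (Set.Icc (0:ℝ) 1) ≤ ENNReal.ofReal 1 := by
      have h3 := MonotoneOn.eVariationOn_le (monotoneOn_id (s := Set.Icc (0:ℝ) 1))
        (Set.left_mem_Icc.mpr zero_le_one) (Set.right_mem_Icc.mpr zero_le_one)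
      rw [Set.inter_self] at h3
      simpa using h3
    calc eVariationOn u (Set.Icc 0 1)
        ≤ (Real.toNNReal (4 * Real.pi / 3) : ℝ≥0∞) * eVariationOn id (Set.Icc (0:ℝ) 1) := h1
      _ ≤ (Real.toNNReal (4 * Real.pi / 3) : ℝ≥0∞) * ENNReal.ofReal 1 := by
          exact mul_le_mul_right h2 _
      _ = ENNReal.ofReal (4 * Real.pi / 3) := by
          rw [ENNReal.ofReal_one, mul_one]
          rfl
  · -- commutator bound
    intro a t _
    set M : ℝ := ‖z * a - a * z‖ with hMdef
    have hM0 : 0 ≤ M := norm_nonneg _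
    have hvec3 : (![a, a, a] : Fin 3 → A) = fun _ => a := by
      funext i
      fin_cases i <;> rfl
    set Da : B := φ (Matrix.diagonal ![a, a, a]) with hDadef
    have hcW : ∀ r : ℝ, W' r * Da = Da * W' r := by
      intro r
      rw [hW'def, hDadef]
      simp only
      rw [← _root_.map_mul, ← _root_.map_mul, hvec3, ρ_comm]
    have hcW' : ∀ r : ℝ, star (W' r) * Da = Da * star (W' r) := by
      intro r
      rw [hW'def, hDadef]
      simp only
      rw [← map_star, ← ρ_star, ← _root_.map_mul, ← _root_.map_mul, hvec3, ρ_comm]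
    -- bound on star z commutator
    have hstarcomm : ‖star z * a - a * star z‖ ≤ M := by
      have hkey : star z * ((a * z - z * a) * star z) = star z * a - a * star z := by
        rw [sub_mul, mul_sub, mul_assoc a z (star z), hz2, mul_one,
          mul_assoc z a (star z), ← mul_assoc (star z) z (a * star z), hz1, one_mul]
      rw [← hkey, CStarRing.norm_mem_unitary_mul _ (Unitary.star_mem hz),
        CStarRing.norm_mul_mem_unitary _ (Unitary.star_mem hz), ← norm_neg, neg_sub]
    -- the two commutators
    have hC1 : VB * Da - Da * VB
        = φ (Matrix.diagonal ![star z * a - a * star z, z * a - a * z, 0]) := by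
      rw [hVBdef, hDadef, ← _root_.map_mul, ← _root_.map_mul, ← map_sub]
      congr 1
      rw [hVdef]
      ext i j
      fin_cases i <;> fin_cases j <;>
        simp [Matrix.mul_apply, Fin.sum_univ_three, Matrix.diagonal, Matrix.of_apply,
          Matrix.cons_val', Matrix.cons_val_zero, Matrix.cons_val_one, Matrix.head_cons,
          Matrix.empty_val', Matrix.cons_val_fin_one, Matrix.vecHead, Matrix.vecTail,
          Function.comp, Matrix.map_apply, Matrix.conjTranspose_apply]
    have hC2 : star VB * Da - Da * star VB
        = φ (Matrix.diagonal ![z * a - a * z, star z * a - a * star z, 0]) := by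
      rw [hVBdef, hDadef, ← map_star, ← _root_.map_mul, ← _root_.map_mul, ← map_sub]
      congr 1
      rw [hVstar]
      ext i j
      fin_cases i <;> fin_cases j <;>
        simp [Matrix.mul_apply, Fin.sum_univ_three, Matrix.diagonal, Matrix.of_apply,
          Matrix.cons_val', Matrix.cons_val_zero, Matrix.cons_val_one, Matrix.head_cons,
          Matrix.empty_val', Matrix.cons_val_fin_one, Matrix.vecHead, Matrix.vecTail,
          Function.comp, Matrix.map_apply, Matrix.conjTranspose_apply]
    have hC1n : ‖VB * Da - Da * VB‖ ≤ M := by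
      rw [hC1]
      apply norm_phi_diag_le φ _ _ hM0
      intro i
      fin_cases i
      · simpa using hstarcomm
      · simp [hMdef]
      · simp [hM0]
    have hC2n : ‖star VB * Da - Da * star VB‖ ≤ M := by
      rw [hC2]
      apply norm_phi_diag_le φ _ _ hM0
      intro i
      fin_cases i
      · simp [hMdef]
      · simpa using hstarcomm
      · simp [hM0]
    -- the key algebraic identity
    have key : u t * Da - Da * u t
        = W' t * ((VB * Da - Da * VB) * (star (W' t) * star VB))
          + W' t * (VB * (star (W' t) * (star VB * Da - Da * star VB))) := by
      have h1 : W' t * Da = Da * W' t := hcW t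
      have h2 : star (W' t) * Da = Da * star (W' t) := hcW' t
      have e1 : W' t * ((VB * Da - Da * VB) * (star (W' t) * star VB))
          = W' t * VB * Da * star (W' t) * star VB
            - W' t * Da * VB * star (W' t) * star VB := by noncomm_ring
      have e2 : W' t * (VB * (star (W' t) * (star VB * Da - Da * star VB)))
          = W' t * VB * star (W' t) * star VB * Da
            - W' t * VB * star (W' t) * Da * star VB := by noncomm_ring
      rw [e1, e2]
      have e3 : W' t * Da * VB * star (W' t) * star VB
          = Da * (W' t * VB * star (W' t) * star VB) := by
        rw [h1]
        noncomm_ring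
      have e4 : W' t * VB * star (W' t) * Da * star VB
          = W' t * VB * Da * star (W' t) * star VB := by
        rw [mul_assoc (W' t * VB) (star (W' t)) Da, h2]
        noncomm_ring
      rw [e3, e4, hudef]
      simp only
      abel
    rw [hudef] at key ⊢
    simp only at key ⊢
    rw [key]
    have hn1 : ‖W' t * ((VB * Da - Da * VB) * (star (W' t) * star VB))‖ ≤ M := by
      rw [CStarRing.norm_mem_unitary_mul _ (hWmem t),
        CStarRing.norm_mul_mem_unitary _ (mul_mem (Unitary.star_mem (hWmem t)) (Unitary.star_mem hVmem))]
      exact hC1n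
    have hn2 : ‖W' t * (VB * (star (W' t) * (star VB * Da - Da * star VB)))‖ ≤ M := by
      rw [CStarRing.norm_mem_unitary_mul _ (hWmem t), CStarRing.norm_mem_unitary_mul _ hVmem,
        CStarRing.norm_mem_unitary_mul _ (Unitary.star_mem (hWmem t))]
      exact hC2n
    calc ‖W' t * ((VB * Da - Da * VB) * (star (W' t) * star VB))
          + W' t * (VB * (star (W' t) * (star VB * Da - Da * star VB)))‖
        ≤ ‖W' t * ((VB * Da - Da * VB) * (star (W' t) * star VB))‖
          + ‖W' t * (VB * (star (W' t) * (star VB * Da - Da * star VB)))‖ := norm_add_le _ _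
      _ ≤ M + M := add_le_add hn1 hn2
      _ = 2 * M := by ring
end

section
/- Let K ⊂ ℂ be a compact subset and f : K → ℂ a continuous function. For every ε > 0 there exists η > 0 with the following property: whenever A is a unital C*-algebra, x ∈ A is a normal element with sp(x) ⊆ K, and y ∈ A is a contraction with ‖[x,y]‖ ≤ η and ‖[x*,y]‖ ≤ η, then ‖[f(x), y]‖ ≤ ε. -/
universe u

/-- Let `K ⊂ ℂ` be compact and `f : K → ℂ` continuous. For every `ε > 0` there exists
`η > 0` such that for any unital C*-algebra `A`, any normal element `x ∈ A` with
`sp(x) ⊆ K`, and any contraction `y ∈ A` with `‖[x,y]‖ ≤ η` and `‖[x*,y]‖ ≤ η`, one has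
`‖[f(x), y]‖ ≤ ε`. -/
theorem commutator_functional_calculus_estimate
    (K : Set ℂ) (hK : IsCompact K) (f : ℂ → ℂ) (hf : ContinuousOn f K) :
    ∀ ε > (0 : ℝ), ∃ η > (0 : ℝ),
      ∀ (A : Type u) [CStarAlgebra A], ∀ x y : A,
        IsStarNormal x → spectrum ℂ x ⊆ K → ‖y‖ ≤ 1 →
        ‖x * y - y * x‖ ≤ η → ‖star x * y - y * star x‖ ≤ η →
        ‖cfc f x * y - y * cfc f x‖ ≤ ε := by
  have : CompactSpace K := isCompact_iff_compactSpace.mp hK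
  intro ε hε
  -- Step 1: commutator estimates for elements of the star-closure of polynomial functions
  have key : ∀ g ∈ (polynomialFunctions K).starClosure, ∃ (G : ℂ → ℂ) (C : ℝ),
      ContinuousOn G K ∧ (∀ z : K, G z = g z) ∧ 0 ≤ C ∧
      ∀ (η : ℝ) (A : Type u) [CStarAlgebra A], ∀ x y : A,
        IsStarNormal x → spectrum ℂ x ⊆ K → ‖y‖ ≤ 1 →
        ‖x * y - y * x‖ ≤ η → ‖star x * y - y * star x‖ ≤ η →
        ‖cfc G x * y - y * cfc G x‖ ≤ C * η := by
    intro g hg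
    rw [polynomialFunctions.starClosure_eq_adjoin_X] at hg
    induction hg using StarAlgebra.adjoin_induction with
    | mem g hg =>
      rw [Set.mem_singleton_iff] at hg
      subst hg
      refine ⟨id, 1, continuousOn_id, fun z => by simp, zero_le_one,
        fun η A _ x y hx hxK hy h1 h2 => ?_⟩
      rw [cfc_id ℂ x, one_mul]
      exact h1
    | algebraMap r =>
      refine ⟨fun _ => r, 0, continuousOn_const, fun z => by simp, le_refl 0,
        fun η A _ x y hx hxK hy h1 h2 => ?_⟩
      rw [cfc_const r x, Algebra.commutes r y, sub_self, norm_zero, zero_mul]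
    | add g₁ g₂ hg₁ hg₂ ih₁ ih₂ =>
      obtain ⟨G₁, C₁, hc₁, hv₁, hC₁, hb₁⟩ := ih₁
      obtain ⟨G₂, C₂, hc₂, hv₂, hC₂, hb₂⟩ := ih₂
      refine ⟨fun z => G₁ z + G₂ z, C₁ + C₂, hc₁.add hc₂,
        fun z => by simp [hv₁ z, hv₂ z], add_nonneg hC₁ hC₂,
        fun η A _ x y hx hxK hy h1 h2 => ?_⟩
      rw [cfc_add x G₁ G₂ (hc₁.mono hxK) (hc₂.mono hxK)]
      have heq : (cfc G₁ x + cfc G₂ x) * y - y * (cfc G₁ x + cfc G₂ x)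
          = (cfc G₁ x * y - y * cfc G₁ x) + (cfc G₂ x * y - y * cfc G₂ x) := by
        noncomm_ring
      rw [heq, add_mul]
      exact (norm_add_le _ _).trans (add_le_add
        (hb₁ η A x y hx hxK hy h1 h2) (hb₂ η A x y hx hxK hy h1 h2))
    | mul g₁ g₂ hg₁ hg₂ ih₁ ih₂ =>
      obtain ⟨G₁, C₁, hc₁, hv₁, hC₁, hb₁⟩ := ih₁
      obtain ⟨G₂, C₂, hc₂, hv₂, hC₂, hb₂⟩ := ih₂
      obtain ⟨M₁, hM₁⟩ := (hK.image_of_continuousOn hc₁.norm).bddAbove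
      obtain ⟨M₂, hM₂⟩ := (hK.image_of_continuousOn hc₂.norm).bddAbove
      have hN₁ : ∀ z ∈ K, ‖G₁ z‖ ≤ max M₁ 0 := fun z hz =>
        le_max_of_le_left (hM₁ ⟨z, hz, rfl⟩)
      have hN₂ : ∀ z ∈ K, ‖G₂ z‖ ≤ max M₂ 0 := fun z hz =>
        le_max_of_le_left (hM₂ ⟨z, hz, rfl⟩)
      refine ⟨fun z => G₁ z * G₂ z, max M₁ 0 * C₂ + C₁ * max M₂ 0, hc₁.mul hc₂,
        fun z => by simp [hv₁ z, hv₂ z],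
        add_nonneg (mul_nonneg (le_max_right _ _) hC₂) (mul_nonneg hC₁ (le_max_right _ _)),
        fun η A _ x y hx hxK hy h1 h2 => ?_⟩
      have hη : (0 : ℝ) ≤ η := le_trans (norm_nonneg _) h1
      rw [cfc_mul G₁ G₂ x (hc₁.mono hxK) (hc₂.mono hxK)]
      set a := cfc G₁ x
      set b := cfc G₂ x
      have ha : ‖a‖ ≤ max M₁ 0 :=
        norm_cfc_le (le_max_right _ _) (fun z hz => hN₁ z (hxK hz))
      have hbn : ‖b‖ ≤ max M₂ 0 :=
        norm_cfc_le (le_max_right _ _) (fun z hz => hN₂ z (hxK hz))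
      have heq : a * b * y - y * (a * b)
          = a * (b * y - y * b) + (a * y - y * a) * b := by noncomm_ring
      rw [heq, add_mul]
      refine (norm_add_le _ _).trans (add_le_add ?_ ?_)
      · calc ‖a * (b * y - y * b)‖ ≤ ‖a‖ * ‖b * y - y * b‖ := norm_mul_le _ _
          _ ≤ max M₁ 0 * (C₂ * η) := by
              exact mul_le_mul ha (hb₂ η A x y hx hxK hy h1 h2) (norm_nonneg _)
                (le_max_right _ _)
          _ = max M₁ 0 * C₂ * η := by ring
      · calc ‖(a * y - y * a) * b‖ ≤ ‖a * y - y * a‖ * ‖b‖ := norm_mul_le _ _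
          _ ≤ C₁ * η * max M₂ 0 := by
              exact mul_le_mul (hb₁ η A x y hx hxK hy h1 h2) hbn (norm_nonneg _)
                (mul_nonneg hC₁ hη)
          _ = C₁ * max M₂ 0 * η := by ring
    | star g hg ih =>
      obtain ⟨G, C, hc, hv, hC, hb⟩ := ih
      refine ⟨fun z => star (G z), C, continuous_star.comp_continuousOn hc,
        fun z => by simp [hv z], hC, fun η A _ x y hx hxK hy h1 h2 => ?_⟩
      rw [cfc_star G x]
      set a := cfc G x
      have key1 : x * star y - star y * x = -star (star x * y - y * star x) := by
        rw [star_sub, star_mul, star_mul, star_star, neg_sub]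
      have key2 : star x * star y - star y * star x = -star (x * y - y * x) := by
        simp only [star_sub, star_mul, star_star, neg_sub]
      have hcomm := hb η A x (star y) hx hxK (by rwa [norm_star])
        (by rw [key1, norm_neg, norm_star]; exact h2)
        (by rw [key2, norm_neg, norm_star]; exact h1)
      have key3 : star a * y - y * star a = -star (a * star y - star y * a) := by
        simp only [star_sub, star_mul, star_star, neg_sub]
      rw [key3, norm_neg, norm_star]
      exact hcomm
  -- Step 2: approximate `f` by an element of the star-closure
  set f' : C(K, ℂ) := ⟨K.restrict f, hf.restrict⟩ with hf'
  have hmem : f' ∈ closure ((polynomialFunctions K).starClosure : Set C(K, ℂ)) := by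
    have h1 : f' ∈ (polynomialFunctions K).starClosure.topologicalClosure := by
      rw [polynomialFunctions.starClosure_topologicalClosure]
      trivial
    rwa [← SetLike.mem_coe, StarSubalgebra.topologicalClosure_coe] at h1
  obtain ⟨g, hgmem, hgdist⟩ := Metric.mem_closure_iff.mp hmem (ε / 3) (by positivity)
  obtain ⟨G, C, hGc, hGv, hC, hb⟩ := key g hgmem
  -- Step 3: choose η and conclude
  refine ⟨ε / (3 * (C + 1)), by positivity, fun A _ x y hx hxK hy h1 h2 => ?_⟩
  have hdiff : ‖cfc f x - cfc G x‖ ≤ ε / 3 := by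
    rw [← cfc_sub f G x (hf.mono hxK) (hGc.mono hxK)]
    refine norm_cfc_le (by positivity) (fun z hz => ?_)
    have hzK : z ∈ K := hxK hz
    have : f z - G z = (f' - g) ⟨z, hzK⟩ := by
      simp [hf', hGv ⟨z, hzK⟩]
      rfl
    rw [this]
    exact le_trans (ContinuousMap.norm_coe_le_norm (f' - g) ⟨z, hzK⟩)
      (le_of_lt (by rwa [← dist_eq_norm]))
  have heq : cfc f x * y - y * cfc f x
      = (cfc G x * y - y * cfc G x)
        + ((cfc f x - cfc G x) * y - y * (cfc f x - cfc G x)) := by noncomm_ring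
  have hcomm := hb (ε / (3 * (C + 1))) A x y hx hxK hy h1 h2
  have h2norm : ‖(cfc f x - cfc G x) * y - y * (cfc f x - cfc G x)‖ ≤ 2 * (ε / 3) := by
    refine (norm_sub_le _ _).trans ?_
    have e1 : ‖(cfc f x - cfc G x) * y‖ ≤ ε / 3 := by
      refine (norm_mul_le _ _).trans ?_
      calc ‖cfc f x - cfc G x‖ * ‖y‖ ≤ (ε / 3) * 1 :=
            mul_le_mul hdiff hy (norm_nonneg _) (by positivity)
        _ = ε / 3 := mul_one _
    have e2 : ‖y * (cfc f x - cfc G x)‖ ≤ ε / 3 := by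
      refine (norm_mul_le _ _).trans ?_
      calc ‖y‖ * ‖cfc f x - cfc G x‖ ≤ 1 * (ε / 3) :=
            mul_le_mul hy hdiff (norm_nonneg _) (by positivity)
        _ = ε / 3 := one_mul _
    linarith
  have hCη : C * (ε / (3 * (C + 1))) ≤ ε / 3 := by
    have ha : C * (ε / (3 * (C + 1))) ≤ (C + 1) * (ε / (3 * (C + 1))) :=
      mul_le_mul_of_nonneg_right (by linarith) (by positivity)
    have hbq : (C + 1) * (ε / (3 * (C + 1))) = ε / 3 := by
      field_simp
    linarith
  calc ‖cfc f x * y - y * cfc f x‖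
      ≤ ‖cfc G x * y - y * cfc G x‖
        + ‖(cfc f x - cfc G x) * y - y * (cfc f x - cfc G x)‖ := by
        rw [heq]; exact norm_add_le _ _
    _ ≤ C * (ε / (3 * (C + 1))) + 2 * (ε / 3) := add_le_add hcomm h2norm
    _ ≤ ε / 3 + 2 * (ε / 3) := by linarith
    _ = ε := by ring
end
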